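/- Suppose D: ℕ → [1, ∞) satisfies: for every m ≥ 2 and every m-homogeneous polynomial P on ℂ^N (any N), the ℓ_{2m/(m+1)}-norm of the coefficients of P is at most D(m) times the sup norm of P on the unit polydisc. Then D(m) ≥ (2 + 2^m)^((m+1)/(2m)) / sqrt(4 + 2^(m+1)) for every m ≥ 2. -/

import Mathlib

open Finset

lemma sqle (z : ℂ) (hz : ‖z‖ ≤ 1) : z.re^2 + z.im^2 ≤ 1 := by
  have h := Complex.sq_norm z
  rw [Complex.normSq_apply] at h
  have : ‖z‖ ≤ 1 := hz
  nlinarith [norm_nonneg z]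

lemma key (c : ℝ) (z w : ℂ) (hz : ‖z‖ ≤ 1) (hw : ‖w‖ ≤ 1) :
    ‖z^2 - w^2 + c*z*w‖ ≤ Real.sqrt (4 + c^2) := by
  rw [← Real.sqrt_sq (norm_nonneg _)]
  apply Real.sqrt_le_sqrt
  have hz2 := sqle z hz
  have hw2 := sqle w hw
  have hns : ‖z^2 - w^2 + c*z*w‖^2 = Complex.normSq (z^2 - w^2 + c*z*w) := by
    rw [← Complex.sq_norm]
  rw [hns]
  simp only [pow_two, Complex.normSq_apply, Complex.add_re, Complex.add_im, Complex.sub_re,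
    Complex.sub_im, Complex.mul_re, Complex.mul_im, Complex.ofReal_re, Complex.ofReal_im]
  set a := z.re; set b := z.im; set p := w.re; set q := w.im
  nlinarith [sq_nonneg (4*(a*p+b*q) - c*((a^2+b^2)-(p^2+q^2))),
    mul_nonneg (sq_nonneg c) (sub_nonneg.2 (by nlinarith : (a^2+b^2+p^2+q^2)^2 ≤ 4)),
    (by nlinarith : (a^2+b^2+p^2+q^2)^2 ≤ 4)]

lemma sumsplit (m : ℕ) (hm : 2 ≤ m) (f : ℕ → ℕ) (hf : ∀ n, 2 ≤ n → f n = 1) :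
    ∑ i ∈ Finset.range m, f i = f 0 + f 1 + (m - 2) := by
  rw [Finset.range_eq_Ico, ← Finset.sum_Ico_consecutive _ (by omega : 0 ≤ 2) hm]
  have h1 : ∑ i ∈ Finset.Ico 0 2, f i = f 0 + f 1 := by
    rw [← Finset.range_eq_Ico]; simp [Finset.sum_range_succ]
  have h2 : ∑ i ∈ Finset.Ico 2 m, f i = m - 2 := by
    rw [Finset.sum_congr rfl (fun i hi => hf i (Finset.mem_Ico.1 hi).1)]
    simp [Nat.card_Ico]
  omega

lemma prodsplit (m : ℕ) (hm : 2 ≤ m) (z : Fin m → ℂ) (f : ℕ → ℕ)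
    (hf : ∀ n, 2 ≤ n → f n = 1) :
    ∏ i : Fin m, z i ^ f i.val =
      z ⟨0, by omega⟩ ^ f 0 * z ⟨1, by omega⟩ ^ f 1 *
        ∏ i ∈ Finset.univ.filter (fun i : Fin m => 2 ≤ (i:ℕ)), z i := by
  rw [← Finset.prod_filter_mul_prod_filter_not Finset.univ (fun i : Fin m => (i:ℕ) < 2)]
  have hfil : Finset.univ.filter (fun i : Fin m => (i:ℕ) < 2) =
      {(⟨0, by omega⟩ : Fin m), ⟨1, by omega⟩} := by
    ext i
    simp only [Finset.mem_filter, Finset.mem_univ, true_and, Finset.mem_insert,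
      Finset.mem_singleton, Fin.ext_iff]
    omega
  have hfil2 : Finset.univ.filter (fun i : Fin m => ¬(i:ℕ) < 2) =
      Finset.univ.filter (fun i : Fin m => 2 ≤ (i:ℕ)) := by
    apply Finset.filter_congr; intro i _; simp only [not_lt]
  rw [hfil, hfil2, Finset.prod_pair (by simp [Fin.ext_iff] : (⟨0, by omega⟩ : Fin m) ≠ ⟨1, by omega⟩)]
  congr 1
  apply Finset.prod_congr rfl
  intro i hi
  rw [hf i.val (by simpa using (Finset.mem_filter.1 hi).2), pow_one]

theorem stmt_7 (D : ℕ → ℝ) (hD : ∀ m, 1 ≤ D m)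
    (hBH : ∀ (m : ℕ), 2 ≤ m → ∀ (N : ℕ) (a : (Fin N →₀ ℕ) →₀ ℂ),
      (∀ α ∈ a.support, (α.sum fun _ k => k) = m) →
      (∑ α ∈ a.support, ‖a α‖ ^ ((2 * (m:ℝ)) / (m + 1))) ^ (((m:ℝ) + 1) / (2 * m)) ≤
        D m * sSup {y : ℝ | ∃ z : Fin N → ℂ, (∀ i, ‖z i‖ ≤ 1) ∧
          y = ‖∑ α ∈ a.support, a α * ∏ i, z i ^ α i‖}) :
    ∀ m : ℕ, 2 ≤ m →
      (2 + (2:ℝ) ^ (m:ℝ)) ^ (((m:ℝ) + 1) / (2 * m)) /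
        Real.sqrt (4 + 2 ^ ((m:ℝ) + 1)) ≤ D m := by
  intro m hm
  set c : ℝ := (2:ℝ) ^ (((m:ℝ) + 1) / 2) with hc_def
  have hc0 : 0 < c := Real.rpow_pos_of_pos two_pos _
  have hm1 : (m:ℝ) + 1 ≠ 0 := by positivity
  have hc2 : c ^ 2 = 2 ^ ((m:ℝ) + 1) := by
    rw [hc_def, ← Real.rpow_natCast ((2:ℝ) ^ _) 2, ← Real.rpow_mul (by norm_num)]
    norm_num
  -- the three exponent functions
  set fA : ℕ → ℕ := fun n => if n = 0 then 2 else if n = 1 then 0 else 1 with hfA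
  set fB : ℕ → ℕ := fun n => if n = 0 then 0 else if n = 1 then 2 else 1 with hfB
  set fC : ℕ → ℕ := fun n => 1 with hfC
  set αA : Fin m →₀ ℕ := Finsupp.equivFunOnFinite.symm (fun i => fA i.val) with hαA
  set αB : Fin m →₀ ℕ := Finsupp.equivFunOnFinite.symm (fun i => fB i.val) with hαB
  set αC : Fin m →₀ ℕ := Finsupp.equivFunOnFinite.symm (fun i => fC i.val) with hαC
  set i0 : Fin m := ⟨0, by omega⟩
  set i1 : Fin m := ⟨1, by omega⟩
  have happA : ∀ i : Fin m, αA i = fA i.val := fun i => rfl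
  have happB : ∀ i : Fin m, αB i = fB i.val := fun i => rfl
  have happC : ∀ i : Fin m, αC i = fC i.val := fun i => rfl
  have hAB : αA ≠ αB := fun h => by
    have := congrFun (congrArg DFunLike.coe h) i0; simp [happA, happB, hfA, hfB, i0] at this
  have hAC : αA ≠ αC := fun h => by
    have := congrFun (congrArg DFunLike.coe h) i0; simp [happA, happC, hfA, hfC, i0] at this
  have hBC : αB ≠ αC := fun h => by
    have := congrFun (congrArg DFunLike.coe h) i1; simp [happB, happC, hfB, hfC, i1] at this
  set a : (Fin m →₀ ℕ) →₀ ℂ :=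
    Finsupp.single αA 1 + Finsupp.single αB (-1) + Finsupp.single αC (c:ℂ) with ha
  have hcC : (c:ℂ) ≠ 0 := by exact_mod_cast hc0.ne'
  have hsupp : a.support = {αA, αB, αC} := by
    rw [ha, Finsupp.support_add_eq, Finsupp.support_add_eq,
      Finsupp.support_single_ne_zero _ one_ne_zero,
      Finsupp.support_single_ne_zero _ (neg_ne_zero.2 one_ne_zero),
      Finsupp.support_single_ne_zero _ hcC]
    · ext x; simp [or_assoc]
    · rw [Finsupp.support_single_ne_zero _ one_ne_zero,
        Finsupp.support_single_ne_zero _ (neg_ne_zero.2 one_ne_zero)]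
      simp [Ne.symm hAB, hAB]
    · rw [Finsupp.support_add_eq, Finsupp.support_single_ne_zero _ one_ne_zero,
        Finsupp.support_single_ne_zero _ (neg_ne_zero.2 one_ne_zero),
        Finsupp.support_single_ne_zero _ hcC]
      · simp [Ne.symm hAC, Ne.symm hBC]
      · rw [Finsupp.support_single_ne_zero _ one_ne_zero,
          Finsupp.support_single_ne_zero _ (neg_ne_zero.2 one_ne_zero)]
        simp [Ne.symm hAB, hAB]
  have haA : a αA = 1 := by simp [ha, Finsupp.single_apply, Ne.symm hAB, Ne.symm hAC]
  have haB : a αB = -1 := by simp [ha, Finsupp.single_apply, hAB, Ne.symm hBC]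
  have haC : a αC = (c:ℂ) := by simp [ha, Finsupp.single_apply, hAC, hBC]
  have hmemB : αB ∉ ({αC} : Finset (Fin m →₀ ℕ)) := by simp [hBC]
  have hmemA : αA ∉ ({αB, αC} : Finset (Fin m →₀ ℕ)) := by simp [hAB, hAC]
  -- degrees
  have hdegsum : ∀ (f : ℕ → ℕ), (∀ n, 2 ≤ n → f n = 1) →
      ((Finsupp.equivFunOnFinite.symm (fun i : Fin m => f i.val)).sum fun _ k => k)
        = f 0 + f 1 + (m - 2) := by
    intro f hf
    rw [Finsupp.sum_fintype _ _ (fun _ => rfl)]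
    have : ∑ i : Fin m, (Finsupp.equivFunOnFinite.symm (fun i : Fin m => f i.val)) i
        = ∑ i ∈ Finset.range m, f i := by
      change ∑ i : Fin m, f i.val = ∑ i ∈ Finset.range m, f i
      rw [Fin.sum_univ_eq_sum_range (fun i => f i)]
    rw [this, sumsplit m hm f hf]
  have hdeg : ∀ α ∈ a.support, (α.sum fun _ k => k) = m := by
    intro α hα
    rw [hsupp] at hα
    simp only [Finset.mem_insert, Finset.mem_singleton] at hα
    rcases hα with rfl | rfl | rfl
    · rw [hαA, hdegsum fA (fun n hn => by
        have h0 : n ≠ 0 := by omega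
        have h1 : n ≠ 1 := by omega
        simp [hfA, h0, h1])]
      simp only [hfA]
      norm_num
      omega
    · rw [hαB, hdegsum fB (fun n hn => by
        have h0 : n ≠ 0 := by omega
        have h1 : n ≠ 1 := by omega
        simp [hfB, h0, h1])]
      simp only [hfB]
      norm_num
      omega
    · rw [hαC, hdegsum fC (fun n hn => rfl)]
      simp only [hfC]
      omega
  -- the key inequality from hBH
  have h1 := hBH m hm m a hdeg
  -- compute the coefficient sum
  have hcsum : (∑ α ∈ a.support, ‖a α‖ ^ ((2 * (m:ℝ)) / (m + 1)))
      = 2 + (2:ℝ) ^ (m:ℝ) := by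
    rw [hsupp, Finset.sum_insert hmemA, Finset.sum_insert hmemB, Finset.sum_singleton,
      haA, haB, haC]
    have hnc : ‖(c:ℂ)‖ = c := by
      rw [Complex.norm_real, Real.norm_of_nonneg hc0.le]
    rw [hnc]
    have : c ^ ((2 * (m:ℝ)) / (m + 1)) = (2:ℝ) ^ (m:ℝ) := by
      rw [hc_def, ← Real.rpow_mul (by norm_num : (0:ℝ) ≤ 2)]
      congr 1
      field_simp
    rw [this]
    simp only [norm_one, norm_neg, Real.one_rpow]
    ring
  rw [hcsum] at h1
  -- bound the sup
  have hsup : sSup {y : ℝ | ∃ z : Fin m → ℂ, (∀ i, ‖z i‖ ≤ 1) ∧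
      y = ‖∑ α ∈ a.support, a α * ∏ i, z i ^ α i‖} ≤ Real.sqrt (4 + 2 ^ ((m:ℝ) + 1)) := by
    apply Real.sSup_le _ (Real.sqrt_nonneg _)
    rintro y ⟨z, hz, rfl⟩
    rw [hsupp, Finset.sum_insert hmemA, Finset.sum_insert hmemB, Finset.sum_singleton,
      haA, haB, haC]
    have hPA : ∏ i, z i ^ αA i = z i0 ^ 2 *
        ∏ i ∈ Finset.univ.filter (fun i : Fin m => 2 ≤ (i:ℕ)), z i := by
      simp only [happA]
      rw [prodsplit m hm z fA (fun n hn => by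
        have h0 : n ≠ 0 := by omega
        have h1 : n ≠ 1 := by omega
        simp [hfA, h0, h1])]
      simp [hfA, i0, i1]
    have hPB : ∏ i, z i ^ αB i = z i1 ^ 2 *
        ∏ i ∈ Finset.univ.filter (fun i : Fin m => 2 ≤ (i:ℕ)), z i := by
      simp only [happB]
      rw [prodsplit m hm z fB (fun n hn => by
        have h0 : n ≠ 0 := by omega
        have h1 : n ≠ 1 := by omega
        simp [hfB, h0, h1])]
      simp [hfB, i0, i1]
    have hPC : ∏ i, z i ^ αC i = z i0 * z i1 *
        ∏ i ∈ Finset.univ.filter (fun i : Fin m => 2 ≤ (i:ℕ)), z i := by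
      simp only [happC]
      rw [prodsplit m hm z fC (fun n hn => rfl)]
      simp [hfC, i0, i1]
    rw [hPA, hPB, hPC]
    have hfac : 1 * (z i0 ^ 2 * ∏ i ∈ Finset.univ.filter (fun i : Fin m => 2 ≤ (i:ℕ)), z i)
        + (-1 * (z i1 ^ 2 * ∏ i ∈ Finset.univ.filter (fun i : Fin m => 2 ≤ (i:ℕ)), z i)
        + (c:ℂ) * (z i0 * z i1 * ∏ i ∈ Finset.univ.filter (fun i : Fin m => 2 ≤ (i:ℕ)), z i))
        = (z i0 ^ 2 - z i1 ^ 2 + (c:ℂ) * z i0 * z i1) *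
            ∏ i ∈ Finset.univ.filter (fun i : Fin m => 2 ≤ (i:ℕ)), z i := by ring
    rw [hfac, norm_mul]
    have hR : ‖∏ i ∈ Finset.univ.filter (fun i : Fin m => 2 ≤ (i:ℕ)), z i‖ ≤ 1 := by
      rw [norm_prod]
      exact Finset.prod_le_one (fun i _ => norm_nonneg _) (fun i _ => hz i)
    calc ‖z i0 ^ 2 - z i1 ^ 2 + (c:ℂ) * z i0 * z i1‖ *
          ‖∏ i ∈ Finset.univ.filter (fun i : Fin m => 2 ≤ (i:ℕ)), z i‖
        ≤ Real.sqrt (4 + c^2) * 1 := by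
          apply mul_le_mul _ hR (norm_nonneg _) (Real.sqrt_nonneg _)
          exact key c (z i0) (z i1) (hz i0) (hz i1)
      _ = Real.sqrt (4 + 2 ^ ((m:ℝ) + 1)) := by rw [mul_one, hc2]
  -- combine
  have hDm := hD m
  have hsqrtpos : 0 < Real.sqrt (4 + 2 ^ ((m:ℝ) + 1)) := Real.sqrt_pos.2 (by positivity)
  rw [div_le_iff₀ hsqrtpos]
  calc (2 + (2:ℝ) ^ (m:ℝ)) ^ (((m:ℝ) + 1) / (2 * m))
      ≤ D m * sSup {y : ℝ | ∃ z : Fin m → ℂ, (∀ i, ‖z i‖ ≤ 1) ∧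
          y = ‖∑ α ∈ a.support, a α * ∏ i, z i ^ α i‖} := h1
    _ ≤ D m * Real.sqrt (4 + 2 ^ ((m:ℝ) + 1)) :=
        mul_le_mul_of_nonneg_left hsup (by linarith)
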